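/- Soundness of CPRHL: if there is a CPRHL proof of the partial reverse Hoare triple [P] C [Q], then [P] C [Q] is valid. -/
import Mathlib


namespace RevHoare

/-! ### States -/

abbrev Var := ℕ
abbrev State := Var → ℕ

/-- state update `σ[x ↦ c]`. -/
def upd (σ : State) (x : Var) (c : ℕ) : State := fun y => if y = x then c else σ y

/-! ### Expressions -/

inductive Expr : Type where
  | var : Var → Expr
  | const : ℕ → Expr
  | app : {k : ℕ} → ((Fin k → ℕ) → ℕ) → (Fin k → Expr) → Expr

namespace Expr

/-- `⟦E⟧σ`. -/
def eval : Expr → State → ℕ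
  | var x, σ => σ x
  | const n, _ => n
  | app f es, σ => f fun i => (es i).eval σ

/-- `E[x := E']` (substitution of `E'` for `x` in the last argument). -/
def subst (x : Var) (E' : Expr) : Expr → Expr
  | var y => if y = x then E' else var y
  | const n => const n
  | app f es => app f fun i => subst x E' (es i)

/-- variables occurring in an expression. -/
def fv : Expr → Finset Var
  | var y => {y}
  | const _ => ∅
  | app _ es => Finset.univ.biUnion fun i => (es i).fv

end Expr

/-! ### Boolean conditions -/

inductive BExpr : Type where
  | rel : {k : ℕ} → ((Fin k → ℕ) → Prop) → (Fin k → Expr) → BExpr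
  | eq : Expr → Expr → BExpr
  | le : Expr → Expr → BExpr
  | not : BExpr → BExpr
  | and : BExpr → BExpr → BExpr
  | or : BExpr → BExpr → BExpr

namespace BExpr

/-- `B.holds σ` means `⟦B⟧σ = ⊤`; `¬ B.holds σ` means `⟦B⟧σ = ⊥`. -/
def holds : BExpr → State → Prop
  | rel R es, σ => R fun i => (es i).eval σ
  | eq E₁ E₂, σ => E₁.eval σ = E₂.eval σ
  | le E₁ E₂, σ => E₁.eval σ ≤ E₂.eval σ
  | not B, σ => ¬ holds B σ
  | and B₁ B₂, σ => holds B₁ σ ∧ holds B₂ σ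
  | or B₁ B₂, σ => holds B₁ σ ∨ holds B₂ σ

/-- `B[x := E]`. -/
def subst (x : Var) (E : Expr) : BExpr → BExpr
  | rel R es => rel R fun i => Expr.subst x E (es i)
  | eq E₁ E₂ => eq (Expr.subst x E E₁) (Expr.subst x E E₂)
  | le E₁ E₂ => le (Expr.subst x E E₁) (Expr.subst x E E₂)
  | not B => not (subst x E B)
  | and B₁ B₂ => and (subst x E B₁) (subst x E B₂)
  | or B₁ B₂ => or (subst x E B₁) (subst x E B₂)

/-- variables occurring in a Boolean condition. -/
def vars : BExpr → Finset Var
  | rel _ es => Finset.univ.biUnion fun i => (es i).fv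
  | eq E₁ E₂ => E₁.fv ∪ E₂.fv
  | le E₁ E₂ => E₁.fv ∪ E₂.fv
  | not B => vars B
  | and B₁ B₂ => vars B₁ ∪ vars B₂
  | or B₁ B₂ => vars B₁ ∪ vars B₂

end BExpr

/-! ### Assertions -/

inductive Assertion : Type where
  | base : BExpr → Assertion
  | not : Assertion → Assertion
  | or : Assertion → Assertion → Assertion
  | and : Assertion → Assertion → Assertion
  | imp : Assertion → Assertion → Assertion
  | ex : Var → Assertion → Assertion
  | all : Var → Assertion → Assertion

namespace Assertion

/-- `P.sat σ` means `σ ⊨ P`. -/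
def sat : Assertion → State → Prop
  | base B, σ => B.holds σ
  | not P, σ => ¬ sat P σ
  | or P Q, σ => sat P σ ∨ sat Q σ
  | and P Q, σ => sat P σ ∧ sat Q σ
  | imp P Q, σ => sat P σ → sat Q σ
  | ex x P, σ => ∃ c : ℕ, sat P (upd σ x c)
  | all x P, σ => ∀ c : ℕ, sat P (upd σ x c)

/-- all variables occurring in `P` (free or bound, including binders). -/
def allVars : Assertion → Finset Var
  | base B => B.vars
  | not P => allVars P
  | or P Q => allVars P ∪ allVars Q
  | and P Q => allVars P ∪ allVars Q
  | imp P Q => allVars P ∪ allVars Q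
  | ex y P => insert y (allVars P)
  | all y P => insert y (allVars P)

/-- naive renaming of the free occurrences of the variable `x` to the variable `z`. -/
def rename (x z : Var) : Assertion → Assertion
  | base B => base (B.subst x (Expr.var z))
  | not P => not (rename x z P)
  | or P Q => or (rename x z P) (rename x z Q)
  | and P Q => and (rename x z P) (rename x z Q)
  | imp P Q => imp (rename x z P) (rename x z Q)
  | ex y P => if y = x then ex y P else ex y (rename x z P)
  | all y P => if y = x then all y P else all y (rename x z P)

/-- size (number of assertion constructors). -/
def asize : Assertion → ℕ
  | base _ => 1
  | not P => asize P + 1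
  | or P Q => asize P + asize Q + 1
  | and P Q => asize P + asize Q + 1
  | imp P Q => asize P + asize Q + 1
  | ex _ P => asize P + 1
  | all _ P => asize P + 1

theorem asize_rename (x z : Var) : ∀ P : Assertion, (rename x z P).asize = P.asize := by
  intro P
  induction P with
  | base B => rfl
  | not P ih => simp [rename, asize, ih]
  | or P Q ih1 ih2 => simp [rename, asize, ih1, ih2]
  | and P Q ih1 ih2 => simp [rename, asize, ih1, ih2]
  | imp P Q ih1 ih2 => simp [rename, asize, ih1, ih2]
  | ex y P ih => by_cases h : y = x <;> simp [rename, asize, h, ih]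
  | all y P ih => by_cases h : y = x <;> simp [rename, asize, h, ih]

/-- a variable not belonging to the finite set `s`. -/
def fresh (s : Finset Var) : Var := s.sup id + 1

/-- capture-avoiding substitution `P[x := E]` (bound variables are renamed afresh). -/
def subst (x : Var) (E : Expr) : Assertion → Assertion
  | base B => base (B.subst x E)
  | not P => not (subst x E P)
  | or P Q => or (subst x E P) (subst x E Q)
  | and P Q => and (subst x E P) (subst x E Q)
  | imp P Q => imp (subst x E P) (subst x E Q)
  | ex y P =>
      let z := fresh (E.fv ∪ insert x (allVars P))
      ex z (subst x E (rename y z P))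
  | all y P =>
      let z := fresh (E.fv ∪ insert x (allVars P))
      all z (subst x E (rename y z P))
termination_by P => P.asize
decreasing_by all_goals simp [asize, asize_rename] <;> omega

end Assertion

/-- semantic entailment `P ⊨ Q` between assertions. -/
def entails (P Q : Assertion) : Prop := ∀ σ : State, P.sat σ → Q.sat σ

/-! ### Programs and small-step semantics -/

/-- non-empty commands `C'` of the grammar. -/
inductive Cmd : Type where
  | assign : Var → Expr → Cmd
  | seq : Cmd → Cmd → Cmd
  | while : BExpr → Option Cmd → Cmd
  | choice : Option Cmd → Option Cmd → Cmd

/-- programs: `none` is the empty program ε, giving the grammar `C ::= ε | C'`. -/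
abbrev Prog := Option Cmd

/-- sequential composition `C₀;C₁` of programs, identifying `ε;C` and `C;ε` with `C`. -/
def Prog.comp : Prog → Prog → Prog
  | none, C => C
  | some c, none => some c
  | some c₀, some c₁ => some (Cmd.seq c₀ c₁)

mutual
/-- variables occurring in a (non-empty) command. -/
def Cmd.vars : Cmd → Finset Var
  | .assign x E => insert x E.fv
  | .seq c₀ c₁ => c₀.vars ∪ c₁.vars
  | .while B C => B.vars ∪ progVars C
  | .choice C₀ C₁ => progVars C₀ ∪ progVars C₁
/-- variables occurring in a program. -/
def progVars : Prog → Finset Var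
  | none => ∅
  | some c => c.vars
end

/-- the small-step relation `⟨C,σ⟩ → ⟨C',σ'⟩` on configurations. -/
inductive Step : Prog × State → Prog × State → Prop where
  | assign {x E σ} : Step (some (.assign x E), σ) (none, upd σ x (E.eval σ))
  | whileTrue {B C σ} : B.holds σ →
      Step (some (.while B C), σ) (Prog.comp C (some (.while B C)), σ)
  | whileFalse {B C σ} : ¬ B.holds σ → Step (some (.while B C), σ) (none, σ)
  | seq {c₀ c₁ σ C₀' σ'} : Step (some c₀, σ) (C₀', σ') →
      Step (some (.seq c₀ c₁), σ) (Prog.comp C₀' (some c₁), σ')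
  | choiceL {C₀ C₁ σ} : Step (some (.choice C₀ C₁), σ) (C₀, σ)
  | choiceR {C₀ C₁ σ} : Step (some (.choice C₀ C₁), σ) (C₁, σ)

/-- `→*`, the reflexive-transitive closure of `→`. -/
def Steps : Prog × State → Prog × State → Prop := Relation.ReflTransGen Step

/-- `→ⁿ`, an `n`-step execution. -/
inductive StepN : ℕ → Prog × State → Prog × State → Prop where
  | refl (c) : StepN 0 c c
  | step {c c' c'' n} : Step c c' → StepN n c' c'' → StepN (n + 1) c c''

/-! ### Partial reverse Hoare triples -/

/-- validity of the partial reverse Hoare triple `[P] C [Q]`. -/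
def Valid (P : Assertion) (C : Prog) (Q : Assertion) : Prop :=
  ∀ σ σ' : State, Q.sat σ' → Steps (C, σ) (none, σ') → P.sat σ

/-- the weakest pre-condition set `WPR(C,Q)`. -/
def WPR (C : Prog) (Q : Assertion) : Set State :=
  {σ | ∃ σ', Steps (C, σ) (none, σ') ∧ Q.sat σ'}

/-! ### The ordinary proof system PRHL -/

/-- provability in the ordinary proof system `PRHL`. -/
inductive PRHL : Assertion → Prog → Assertion → Prop where
  | ax (Q) : PRHL Q none Q
  | assign (Q x E) : PRHL (Q.subst x E) (some (.assign x E)) Q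
  | seq {P R Q C₀ C₁} : PRHL P C₀ R → PRHL R C₁ Q → PRHL P (Prog.comp C₀ C₁) Q
  | cons {P P' Q Q' C} : PRHL P C Q → entails P P' → entails Q' Q → PRHL P' C Q'
  | or {P Q C₀ C₁} : PRHL P C₀ Q → PRHL P C₁ Q → PRHL P (some (.choice C₀ C₁)) Q
  | whileR {P B C} : PRHL ((Assertion.base B).imp P) C P →
      PRHL P (some (.while B C)) ((Assertion.not (.base B)).imp P)

/-! ### The cyclic proof system CPRHL -/

/-- a partial reverse Hoare triple `[pre] prog [post]`. -/
structure Triple : Type where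
  pre : Assertion
  prog : Prog
  post : Assertion

/-- one application of a CPRHL rule other than (Cons): conclusion and its list of premises. -/
inductive CRule : Triple → List Triple → Prop where
  | ax (Q) : CRule ⟨Q, none, Q⟩ []
  | assign (P Q x E C) :
      CRule ⟨P.subst x E, Prog.comp (some (.assign x E)) C, Q⟩ [⟨P, C, Q⟩]
  | or (P Q C₀ C₁ C) :
      CRule ⟨P, Prog.comp (some (.choice C₀ C₁)) C, Q⟩
        [⟨P, Prog.comp C₀ C, Q⟩, ⟨P, Prog.comp C₁ C, Q⟩]
  | whileR (P Q B C C') :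
      CRule ⟨P, Prog.comp (some (.while B C)) C', Q⟩
        [⟨(Assertion.not (.base B)).imp P, C', Q⟩,
         ⟨(Assertion.base B).imp P, Prog.comp C (Prog.comp (some (.while B C)) C'), Q⟩]

/-- one application of the CPRHL rule (Cons): conclusion `t` from premise `t'`. -/
def ConsRule (t t' : Triple) : Prop :=
  t.prog = t'.prog ∧ entails t'.pre t.pre ∧ entails t.post t'.post

/-- A `CPRHL` pre-proof (with open leaves), presented as a finite proof graph:
back-link leaves are identified with their companions, which carry the same label.
`isOpen v = true` marks the proper open leaves, which carry no rule.
At every other node either the rule (Cons) (when `isCons v = true`) or one of the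
remaining rules is applied, whose premises are the labels of the children. -/
structure CPreProof : Type where
  size : ℕ
  root : Fin size
  label : Fin size → Triple
  isOpen : Fin size → Bool
  isCons : Fin size → Bool
  children : Fin size → List (Fin size)
  open_ok : ∀ v, isOpen v = true → children v = []
  cons_ok : ∀ v, isOpen v = false → isCons v = true →
      ∃ w, children v = [w] ∧ ConsRule (label v) (label w)
  rule_ok : ∀ v, isOpen v = false → isCons v = false →
      CRule (label v) ((children v).map label)

/-- the global soundness condition: along every infinite path (in the tree unfolding
induced by the back-links), rules other than (Cons) are applied infinitely often. -/
def CPreProof.GlobalSound (D : CPreProof) : Prop :=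
  ∀ f : ℕ → Fin D.size, (∀ i, f (i + 1) ∈ D.children (f i)) →
    ∀ N, ∃ i, N ≤ i ∧ D.isCons (f i) = false

/-- provability in the cyclic proof system `CPRHL`: there is a CPRHL proof
(a globally sound pre-proof without proper open leaves) of the given triple. -/
def CProvable (t : Triple) : Prop :=
  ∃ D : CPreProof, D.GlobalSound ∧ D.label D.root = t ∧ ∀ v, D.isOpen v = false


/-! ### Auxiliary lemmas for soundness -/

section Aux

lemma upd_apply_same (σ : State) (x : Var) (c : ℕ) : upd σ x c x = c := by simp [upd]

lemma upd_apply_ne (σ : State) {x y : Var} (c : ℕ) (h : y ≠ x) : upd σ x c y = σ y := by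
  simp [upd, h]

lemma upd_upd (σ : State) (x : Var) (a b : ℕ) : upd (upd σ x a) x b = upd σ x b := by
  funext y; by_cases h : y = x <;> simp [upd, h]

lemma upd_comm (σ : State) {x y : Var} (a b : ℕ) (h : x ≠ y) :
    upd (upd σ x a) y b = upd (upd σ y b) x a := by
  funext v
  by_cases hv : v = y
  · subst hv; simp [upd, h, Ne.symm h]
  · by_cases hv' : v = x <;> simp [upd, hv, hv', h]

lemma Expr.eval_subst (x : Var) (E' : Expr) :
    ∀ (e : Expr) (σ : State), (Expr.subst x E' e).eval σ = e.eval (upd σ x (E'.eval σ)) := by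
  intro e
  induction e with
  | var y => intro σ; by_cases h : y = x <;> simp [Expr.subst, Expr.eval, upd, h]
  | const n => intro σ; rfl
  | app f es ih =>
      intro σ
      simp only [Expr.subst, Expr.eval]
      congr 1
      funext i
      exact ih i σ

lemma Expr.eval_congr : ∀ (e : Expr) (σ σ' : State),
    (∀ v ∈ e.fv, σ v = σ' v) → e.eval σ = e.eval σ' := by
  intro e
  induction e with
  | var y => intro σ σ' h; exact h y (by simp [Expr.fv])
  | const n => intro _ _ _; rfl
  | app f es ih =>
      intro σ σ' h
      simp only [Expr.eval]
      congr 1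
      funext i
      exact ih i σ σ' fun v hv => h v (by simp [Expr.fv]; exact ⟨i, hv⟩)

lemma BExpr.holds_subst (x : Var) (E : Expr) :
    ∀ (B : BExpr) (σ : State), (BExpr.subst x E B).holds σ ↔ B.holds (upd σ x (E.eval σ)) := by
  intro B
  induction B with
  | rel R es =>
      intro σ
      simp only [BExpr.subst, BExpr.holds]
      have : (fun i => (Expr.subst x E (es i)).eval σ)
          = fun i => (es i).eval (upd σ x (E.eval σ)) :=
        funext fun i => Expr.eval_subst x E (es i) σ
      rw [this]
  | eq E₁ E₂ => intro σ; simp [BExpr.subst, BExpr.holds, Expr.eval_subst]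
  | le E₁ E₂ => intro σ; simp [BExpr.subst, BExpr.holds, Expr.eval_subst]
  | not B ih => intro σ; simp [BExpr.subst, BExpr.holds, ih]
  | and B₁ B₂ ih₁ ih₂ => intro σ; simp [BExpr.subst, BExpr.holds, ih₁, ih₂]
  | or B₁ B₂ ih₁ ih₂ => intro σ; simp [BExpr.subst, BExpr.holds, ih₁, ih₂]

lemma BExpr.holds_congr : ∀ (B : BExpr) (σ σ' : State),
    (∀ v ∈ B.vars, σ v = σ' v) → (B.holds σ ↔ B.holds σ') := by
  intro B
  induction B with
  | rel R es =>
      intro σ σ' h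
      simp only [BExpr.holds]
      have : (fun i => (es i).eval σ) = fun i => (es i).eval σ' := by
        funext i
        exact Expr.eval_congr _ _ _ fun v hv => h v (by simp [BExpr.vars]; exact ⟨i, hv⟩)
      rw [this]
  | eq E₁ E₂ =>
      intro σ σ' h
      simp only [BExpr.holds]
      rw [Expr.eval_congr E₁ σ σ' fun v hv => h v (by simp [BExpr.vars, hv]),
        Expr.eval_congr E₂ σ σ' fun v hv => h v (by simp [BExpr.vars, hv])]
  | le E₁ E₂ =>
      intro σ σ' h
      simp only [BExpr.holds]
      rw [Expr.eval_congr E₁ σ σ' fun v hv => h v (by simp [BExpr.vars, hv]),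
        Expr.eval_congr E₂ σ σ' fun v hv => h v (by simp [BExpr.vars, hv])]
  | not B ih => intro σ σ' h; simp only [BExpr.holds]; rw [ih σ σ' h]
  | and B₁ B₂ ih₁ ih₂ =>
      intro σ σ' h
      simp only [BExpr.holds]
      rw [ih₁ σ σ' fun v hv => h v (by simp [BExpr.vars, hv]),
        ih₂ σ σ' fun v hv => h v (by simp [BExpr.vars, hv])]
  | or B₁ B₂ ih₁ ih₂ =>
      intro σ σ' h
      simp only [BExpr.holds]
      rw [ih₁ σ σ' fun v hv => h v (by simp [BExpr.vars, hv]),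
        ih₂ σ σ' fun v hv => h v (by simp [BExpr.vars, hv])]

lemma Assertion.sat_congr : ∀ (P : Assertion) (σ σ' : State),
    (∀ v ∈ P.allVars, σ v = σ' v) → (P.sat σ ↔ P.sat σ') := by
  intro P
  induction P with
  | base B => intro σ σ' h; exact BExpr.holds_congr B σ σ' h
  | not P ih => intro σ σ' h; simp only [Assertion.sat]; rw [ih σ σ' h]
  | or P Q ih₁ ih₂ =>
      intro σ σ' h
      simp only [Assertion.sat]
      rw [ih₁ σ σ' fun v hv => h v (by simp [Assertion.allVars, hv]),
        ih₂ σ σ' fun v hv => h v (by simp [Assertion.allVars, hv])]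
  | and P Q ih₁ ih₂ =>
      intro σ σ' h
      simp only [Assertion.sat]
      rw [ih₁ σ σ' fun v hv => h v (by simp [Assertion.allVars, hv]),
        ih₂ σ σ' fun v hv => h v (by simp [Assertion.allVars, hv])]
  | imp P Q ih₁ ih₂ =>
      intro σ σ' h
      simp only [Assertion.sat]
      rw [ih₁ σ σ' fun v hv => h v (by simp [Assertion.allVars, hv]),
        ih₂ σ σ' fun v hv => h v (by simp [Assertion.allVars, hv])]
  | ex y P ih =>
      intro σ σ' h
      simp only [Assertion.sat]
      apply exists_congr; intro c
      apply ih
      intro v hv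
      by_cases hvy : v = y
      · simp [upd, hvy]
      · simp [upd, hvy]; exact h v (by simp [Assertion.allVars, hv])
  | all y P ih =>
      intro σ σ' h
      simp only [Assertion.sat]
      apply forall_congr'; intro c
      apply ih
      intro v hv
      by_cases hvy : v = y
      · simp [upd, hvy]
      · simp [upd, hvy]; exact h v (by simp [Assertion.allVars, hv])

lemma Assertion.sat_rename (x z : Var) : ∀ (P : Assertion), z ∉ P.allVars →
    ∀ σ : State, (P.rename x z).sat σ ↔ P.sat (upd σ x (σ z)) := by
  intro P
  induction P with
  | base B =>
      intro _ σ
      simpa [Assertion.rename, Assertion.sat, Expr.eval] using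
        BExpr.holds_subst x (Expr.var z) B σ
  | not P ih =>
      intro hz σ
      simp only [Assertion.rename, Assertion.sat]
      rw [ih hz σ]
  | or P Q ih₁ ih₂ =>
      intro hz σ
      simp only [Assertion.allVars, Finset.mem_union] at hz
      push_neg at hz
      simp only [Assertion.rename, Assertion.sat]
      rw [ih₁ hz.1 σ, ih₂ hz.2 σ]
  | and P Q ih₁ ih₂ =>
      intro hz σ
      simp only [Assertion.allVars, Finset.mem_union] at hz
      push_neg at hz
      simp only [Assertion.rename, Assertion.sat]
      rw [ih₁ hz.1 σ, ih₂ hz.2 σ]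
  | imp P Q ih₁ ih₂ =>
      intro hz σ
      simp only [Assertion.allVars, Finset.mem_union] at hz
      push_neg at hz
      simp only [Assertion.rename, Assertion.sat]
      rw [ih₁ hz.1 σ, ih₂ hz.2 σ]
  | ex y P ih =>
      intro hz σ
      simp only [Assertion.allVars, Finset.mem_insert] at hz
      push_neg at hz
      obtain ⟨hzy, hzP⟩ := hz
      by_cases hyx : y = x
      · subst hyx
        simp only [Assertion.rename, if_pos rfl, Assertion.sat]
        apply exists_congr; intro c
        rw [upd_upd]
      · simp only [Assertion.rename, if_neg hyx, Assertion.sat]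
        apply exists_congr; intro c
        rw [ih hzP (upd σ y c), upd_apply_ne σ c hzy,
          upd_comm (x := y) (y := x) σ c (σ z) hyx]
  | all y P ih =>
      intro hz σ
      simp only [Assertion.allVars, Finset.mem_insert] at hz
      push_neg at hz
      obtain ⟨hzy, hzP⟩ := hz
      by_cases hyx : y = x
      · subst hyx
        simp only [Assertion.rename, if_pos rfl, Assertion.sat]
        apply forall_congr'; intro c
        rw [upd_upd]
      · simp only [Assertion.rename, if_neg hyx, Assertion.sat]
        apply forall_congr'; intro c
        rw [ih hzP (upd σ y c), upd_apply_ne σ c hzy,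
          upd_comm (x := y) (y := x) σ c (σ z) hyx]

lemma Assertion.fresh_not_mem (s : Finset Var) : Assertion.fresh s ∉ s := by
  intro h
  have h2 : id (Assertion.fresh s) ≤ s.sup id := Finset.le_sup h
  simp only [Assertion.fresh, id_eq] at h2
  exact Nat.not_succ_le_self _ h2

lemma Assertion.sat_subst_aux : ∀ (n : ℕ) (P : Assertion), P.asize ≤ n →
    ∀ (x : Var) (E : Expr) (σ : State),
    (Assertion.subst x E P).sat σ ↔ P.sat (upd σ x (E.eval σ)) := by
  intro n
  induction n with
  | zero => intro P h; cases P <;> simp [Assertion.asize] at h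
  | succ n ih =>
    intro P h x E σ
    cases P with
    | base B =>
        simp only [Assertion.subst, Assertion.sat]
        exact BExpr.holds_subst x E B σ
    | not P =>
        simp only [Assertion.asize] at h
        simp only [Assertion.subst, Assertion.sat]
        rw [ih P (by omega) x E σ]
    | or P Q =>
        simp only [Assertion.asize] at h
        simp only [Assertion.subst, Assertion.sat]
        rw [ih P (by omega) x E σ, ih Q (by omega) x E σ]
    | and P Q =>
        simp only [Assertion.asize] at h
        simp only [Assertion.subst, Assertion.sat]
        rw [ih P (by omega) x E σ, ih Q (by omega) x E σ]
    | imp P Q =>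
        simp only [Assertion.asize] at h
        simp only [Assertion.subst, Assertion.sat]
        rw [ih P (by omega) x E σ, ih Q (by omega) x E σ]
    | ex y P =>
        simp only [Assertion.asize] at h
        rw [Assertion.subst]
        simp only [Assertion.sat]
        set z := Assertion.fresh (E.fv ∪ insert x P.allVars) with hzdef
        have hzfresh := Assertion.fresh_not_mem (E.fv ∪ insert x P.allVars)
        rw [← hzdef] at hzfresh
        simp only [Finset.mem_union, Finset.mem_insert, not_or] at hzfresh
        obtain ⟨hzE, hzx, hzP⟩ := hzfresh
        apply exists_congr; intro c
        rw [ih (P.rename y z) (by rw [Assertion.asize_rename]; omega) x E (upd σ z c)]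
        have heval : E.eval (upd σ z c) = E.eval σ :=
          Expr.eval_congr E _ _ fun v hv => upd_apply_ne σ c (fun hc => hzE (hc ▸ hv))
        rw [heval]
        have hzP' : z ∉ P.allVars := hzP
        rw [Assertion.sat_rename y z P hzP' _]
        have hτz : (upd (upd σ z c) x (E.eval σ)) z = c := by
          rw [upd_apply_ne _ _ (Ne.symm (fun hc => hzx hc.symm)), upd_apply_same]
        rw [hτz]
        apply Assertion.sat_congr
        intro v hv
        have hvz : v ≠ z := fun hc => hzP (hc ▸ hv)
        by_cases hvy : v = y
        · simp [upd, hvy]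
        · by_cases hvx : v = x <;> simp [upd, hvy, hvx, hvz]
    | all y P =>
        simp only [Assertion.asize] at h
        rw [Assertion.subst]
        simp only [Assertion.sat]
        set z := Assertion.fresh (E.fv ∪ insert x P.allVars) with hzdef
        have hzfresh := Assertion.fresh_not_mem (E.fv ∪ insert x P.allVars)
        rw [← hzdef] at hzfresh
        simp only [Finset.mem_union, Finset.mem_insert, not_or] at hzfresh
        obtain ⟨hzE, hzx, hzP⟩ := hzfresh
        apply forall_congr'; intro c
        rw [ih (P.rename y z) (by rw [Assertion.asize_rename]; omega) x E (upd σ z c)]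
        have heval : E.eval (upd σ z c) = E.eval σ :=
          Expr.eval_congr E _ _ fun v hv => upd_apply_ne σ c (fun hc => hzE (hc ▸ hv))
        rw [heval]
        have hzP' : z ∉ P.allVars := hzP
        rw [Assertion.sat_rename y z P hzP' _]
        have hτz : (upd (upd σ z c) x (E.eval σ)) z = c := by
          rw [upd_apply_ne _ _ (Ne.symm (fun hc => hzx hc.symm)), upd_apply_same]
        rw [hτz]
        apply Assertion.sat_congr
        intro v hv
        have hvz : v ≠ z := fun hc => hzP (hc ▸ hv)
        by_cases hvy : v = y
        · simp [upd, hvy]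
        · by_cases hvx : v = x <;> simp [upd, hvy, hvx, hvz]

lemma Assertion.sat_subst (P : Assertion) (x : Var) (E : Expr) (σ : State) :
    (Assertion.subst x E P).sat σ ↔ P.sat (upd σ x (E.eval σ)) :=
  Assertion.sat_subst_aux P.asize P (le_refl _) x E σ

/-! ### Program lemmas -/

lemma Prog.comp_none (C : Prog) : Prog.comp C none = C := by cases C <;> rfl

lemma Prog.comp_some (c : Cmd) (C : Prog) : ∃ c', Prog.comp (some c) C = some c' := by
  cases C <;> exact ⟨_, rfl⟩

lemma Prog.comp_eq_none {p q : Prog} (h : Prog.comp p q = none) :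
    p = none ∧ q = none := by
  cases p <;> cases q <;> simp [Prog.comp] at h ⊢

lemma stepN_none_inv {σ σ' : State} {n : ℕ}
    (h : StepN n ((none : Prog), σ) ((none : Prog), σ')) : n = 0 ∧ σ' = σ := by
  cases h with
  | refl => exact ⟨rfl, rfl⟩
  | step hs _ => cases hs

lemma stepN_snoc {p q r : Prog × State} {n : ℕ} (h : StepN n p q) (hs : Step q r) :
    StepN (n + 1) p r := by
  induction h with
  | refl => exact .step hs (.refl _)
  | step h1 _ ih => exact .step h1 (ih hs)

lemma steps_stepN {p q : Prog × State} (h : Steps p q) : ∃ n, StepN n p q := by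
  induction h with
  | refl => exact ⟨0, .refl _⟩
  | tail _ h2 ih => obtain ⟨n, hn⟩ := ih; exact ⟨n + 1, stepN_snoc hn h2⟩

lemma step_comp_inv {c : Cmd} {C : Prog} {σ : State} {q : Prog × State}
    (h : Step (Prog.comp (some c) C, σ) q) :
    ∃ C' σ', Step (some c, σ) (C', σ') ∧ q = (Prog.comp C' C, σ') := by
  cases C with
  | none =>
      obtain ⟨q1, q2⟩ := q
      exact ⟨q1, q2, h, by rw [Prog.comp_none]⟩
  | some c₁ =>
      cases h with
      | seq hs => exact ⟨_, _, hs, rfl⟩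

lemma stepN_comp_inv {c : Cmd} {C : Prog} {σ σ' : State} {n : ℕ}
    (h : StepN n (Prog.comp (some c) C, σ) ((none : Prog), σ')) :
    ∃ m C'' σ'', n = m + 1 ∧ Step (some c, σ) (C'', σ'') ∧
      StepN m (Prog.comp C'' C, σ'') ((none : Prog), σ') := by
  obtain ⟨c', hc'⟩ := Prog.comp_some c C
  rw [hc'] at h
  cases h with
  | step hs hrest =>
      rw [← hc'] at hs
      obtain ⟨C'', σ'', hstep, hq⟩ := step_comp_inv hs
      subst hq
      exact ⟨_, C'', σ'', rfl, hstep, hrest⟩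

lemma stepN_zero {p q : Prog × State} (h : StepN 0 p q) : p = q := by
  cases h; rfl

lemma step_comp {c : Cmd} {σ σ' : State} {C' X : Prog} (h : Step (some c, σ) (C', σ')) :
    Step (Prog.comp (some c) X, σ) (Prog.comp C' X, σ') := by
  cases X with
  | none => simp only [Prog.comp_none]; exact h
  | some x => exact .seq h

lemma stepN_reassoc : ∀ (n : ℕ) (a b c : Prog) (σ σ' : State),
    StepN n (Prog.comp (Prog.comp a b) c, σ) ((none : Prog), σ') →
    StepN n (Prog.comp a (Prog.comp b c), σ) ((none : Prog), σ') := by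
  intro n
  induction n with
  | zero =>
      intro a b c σ σ' h
      have heq : ((Prog.comp (Prog.comp a b) c, σ) : Prog × State) = (none, σ') :=
        stepN_zero h
      obtain ⟨h1, h2⟩ := Prod.mk.injEq .. ▸ heq
      obtain ⟨h3, rfl⟩ := Prog.comp_eq_none h1
      obtain ⟨rfl, rfl⟩ := Prog.comp_eq_none h3
      subst h2
      exact .refl _
  | succ n ih =>
      intro a b c σ σ' h
      cases a with
      | none => exact h
      | some ca =>
          cases h with
          | step hs hrest =>
              obtain ⟨d, hd⟩ := Prog.comp_some ca b
              rw [hd] at hs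
              obtain ⟨D', σ'', h1, rfl⟩ := step_comp_inv hs
              rw [← hd] at h1
              obtain ⟨C', σ''', h2, h3⟩ := step_comp_inv h1
              obtain ⟨rfl, rfl⟩ := Prod.mk.injEq .. ▸ h3
              exact .step (step_comp h2) (ih C' b c _ σ' hrest)

/-! ### Counterexamples -/

/-- a counterexample of length `n` to a triple. -/
def Cex (t : Triple) (n : ℕ) : Prop :=
  ∃ σ σ' : State, t.post.sat σ' ∧ StepN n (t.prog, σ) ((none : Prog), σ') ∧ ¬ t.pre.sat σ

lemma crule_step {t : Triple} {ts : List Triple} (hr : CRule t ts) {n : ℕ} (hc : Cex t n) :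
    ∃ t' ∈ ts, ∃ m < n, Cex t' m := by
  obtain ⟨σ, σ', hq, hsteps, hp⟩ := hc
  cases hr with
  | ax Q =>
      obtain ⟨_, rfl⟩ := stepN_none_inv hsteps
      exact absurd hq hp
  | assign P Q x E C =>
      obtain ⟨m, C'', σ'', hn, hstep, hrest⟩ := stepN_comp_inv hsteps
      cases hstep with
      | assign =>
          refine ⟨⟨P, C, Q⟩, by simp, m, by omega, upd σ x (E.eval σ), σ', hq, hrest, ?_⟩
          intro hsat
          exact hp ((Assertion.sat_subst P x E σ).mpr hsat)
  | or P Q C₀ C₁ C =>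
      obtain ⟨m, C'', σ'', hn, hstep, hrest⟩ := stepN_comp_inv hsteps
      cases hstep with
      | choiceL => exact ⟨⟨P, Prog.comp C₀ C, Q⟩, by simp, m, by omega, σ, σ', hq, hrest, hp⟩
      | choiceR => exact ⟨⟨P, Prog.comp C₁ C, Q⟩, by simp, m, by omega, σ, σ', hq, hrest, hp⟩
  | whileR P Q B C C' =>
      obtain ⟨m, C'', σ'', hn, hstep, hrest⟩ := stepN_comp_inv hsteps
      cases hstep with
      | whileTrue hB =>
          have hrest := stepN_reassoc _ _ _ _ _ _ hrest
          refine ⟨⟨(Assertion.base B).imp P, Prog.comp C (Prog.comp (some (.while B C)) C'), Q⟩,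
            by simp, m, by omega, σ, σ', hq, hrest, ?_⟩
          intro hsat
          exact hp (hsat hB)
      | whileFalse hB =>
          refine ⟨⟨(Assertion.not (.base B)).imp P, C', Q⟩, by simp, m, by omega,
            σ, σ', hq, hrest, ?_⟩
          intro hsat
          exact hp (hsat hB)

end Aux

/-- Soundness of CPRHL: if there is a CPRHL proof of the partial
reverse Hoare triple `[P] C [Q]`, then `[P] C [Q]` is valid. -/
theorem cprhl_sound (P Q : Assertion) (C : Prog) (h : CProvable ⟨P, C, Q⟩) :
    Valid P C Q := by
  obtain ⟨D, hGS, hroot, hclosed⟩ := h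
  intro σ σ' hq hsteps
  by_contra hp
  obtain ⟨n₀, hn₀⟩ := steps_stepN hsteps
  have hc0 : Cex (D.label D.root) n₀ := by
    rw [hroot]; exact ⟨σ, σ', hq, hn₀, hp⟩
  haveI : Nonempty (Fin D.size) := ⟨D.root⟩
  have loc : ∀ (v : Fin D.size) (n : ℕ), Cex (D.label v) n →
      ∃ w, w ∈ D.children v ∧ ∃ m, Cex (D.label w) m ∧ m ≤ n ∧
        (D.isCons v = false → m < n) := by
    intro v n hc
    cases hcons : D.isCons v with
    | true =>
        obtain ⟨w, hw, hprog, hpre, hpost⟩ := D.cons_ok v (hclosed v) hcons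
        obtain ⟨τ, τ', hq', hs, hp'⟩ := hc
        refine ⟨w, by simp [hw], n,
          ⟨τ, τ', hpost τ' hq', hprog ▸ hs, fun hsat => hp' (hpre τ hsat)⟩,
          le_refl _, by simp [hcons]⟩
    | false =>
        have hr := D.rule_ok v (hclosed v) hcons
        obtain ⟨t', ht', m, hm, hcex⟩ := crule_step hr hc
        obtain ⟨w, hw, rfl⟩ := List.mem_map.mp ht'
        exact ⟨w, hw, m, hcex, le_of_lt hm, fun _ => hm⟩
  choose! W hWmem M hMcex hMle hMlt using loc
  let F : ℕ → {p : Fin D.size × ℕ // Cex (D.label p.1) p.2} := fun i =>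
    Nat.rec ⟨(D.root, n₀), hc0⟩
      (fun _ p => ⟨(W p.1.1 p.1.2, M p.1.1 p.1.2), hMcex p.1.1 p.1.2 p.2⟩) i
  let f : ℕ → Fin D.size := fun i => (F i).1.1
  let g : ℕ → ℕ := fun i => (F i).1.2
  have hcex : ∀ i, Cex (D.label (f i)) (g i) := fun i => (F i).2
  have hchild : ∀ i, f (i + 1) ∈ D.children (f i) := fun i => hWmem (f i) (g i) (hcex i)
  have hle : ∀ i, g (i + 1) ≤ g i := fun i => hMle (f i) (g i) (hcex i)
  have hlt : ∀ i, D.isCons (f i) = false → g (i + 1) < g i :=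
    fun i => hMlt (f i) (g i) (hcex i)
  have hmono : ∀ i j, i ≤ j → g j ≤ g i := by
    intro i j hij
    induction hij with
    | refl => exact le_refl _
    | step _ ih => exact le_trans (hle _) ih
  have key : ∀ k, ∃ i, g i + k ≤ g 0 := by
    intro k
    induction k with
    | zero => exact ⟨0, by omega⟩
    | succ k ihk =>
        obtain ⟨i, hi⟩ := ihk
        obtain ⟨j, hij, hj⟩ := hGS f hchild i
        have h1 : g (j + 1) < g j := hlt j hj
        have h2 : g j ≤ g i := hmono i j hij
        exact ⟨j + 1, by omega⟩
  obtain ⟨i, hi⟩ := key (g 0 + 1)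
  omega

end RevHoare
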